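/- Let h_1, ..., h_n be continuous real-valued functions on a space X such that for every subset Λ ⊆ {1,...,n}, the function Σ_{i∈Λ} h_i is an indicator function (values in [-1/32, 1+1/32], always < 1/4 or > 3/4), and such that for every partition Λ ⊔ Γ = {1,...,n}, the sets X_{Σ_Λ} and X_{Σ_Γ} are disjoint with union X. Then the sets X_{h_1}, ..., X_{h_n} are pairwise disjoint and their union is X, and for every Λ, X_{Σ_{i∈Λ} h_i} = ⋃_{i∈Λ} X_{h_i}. -/

import Mathlib

open Finset in
/-- partitions of unity by indicator functions induce partitions of
the space. -/
theorem stmt_17 {X : Type*} [TopologicalSpace X] (n : ℕ) (h : Fin n → X → ℝ)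
    (hc : ∀ i, Continuous (h i))
    (hind : ∀ Λ : Finset (Fin n),
      (∀ x, -(1/32) ≤ ∑ i ∈ Λ, h i x ∧ (∑ i ∈ Λ, h i x) ≤ 1 + 1/32) ∧
      (∀ x, (∑ i ∈ Λ, h i x) < 1/4 ∨ (∑ i ∈ Λ, h i x) > 3/4))
    (hpart : ∀ Λ : Finset (Fin n),
      {x | (∑ i ∈ Λ, h i x) > 1/2} ∩ {x | (∑ i ∈ Λᶜ, h i x) > 1/2} = ∅ ∧
      {x | (∑ i ∈ Λ, h i x) > 1/2} ∪ {x | (∑ i ∈ Λᶜ, h i x) > 1/2} =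
        Set.univ) :
    (∀ i j : Fin n, i ≠ j →
      {x | h i x > 1/2} ∩ {x | h j x > 1/2} = ∅) ∧
    (⋃ i, {x | h i x > 1/2}) = Set.univ ∧
    (∀ Λ : Finset (Fin n),
      {x | (∑ i ∈ Λ, h i x) > 1/2} = ⋃ i ∈ Λ, {x | h i x > 1/2}) := by
  have nokey : ∀ (x : X) (Λ Γ : Finset (Fin n)), Disjoint Λ Γ →
      ¬((∑ i ∈ Λ, h i x) > 1/2 ∧ (∑ i ∈ Γ, h i x) > 1/2) := by
    intro x Λ Γ hd ⟨h1, h2⟩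
    have hU := Finset.sum_union hd (f := fun i => h i x)
    have hΛd := (hind Λ).2 x
    have hΓd := (hind Γ).2 x
    have hUb := ((hind (Λ ∪ Γ)).1 x).2
    rw [hU] at hUb
    rcases hΛd with h3 | h3 <;> rcases hΓd with h4 | h4 <;> linarith
  have key : ∀ (x : X) (Λ Γ : Finset (Fin n)), Disjoint Λ Γ →
      ((∑ i ∈ Λ ∪ Γ, h i x) > 1/2 ↔
        (∑ i ∈ Λ, h i x) > 1/2 ∨ (∑ i ∈ Γ, h i x) > 1/2) := by
    intro x Λ Γ hd
    have hU := Finset.sum_union hd (f := fun i => h i x)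
    have hΛd := (hind Λ).2 x
    have hΓd := (hind Γ).2 x
    have hΛb := ((hind Λ).1 x).1
    have hΓb := ((hind Γ).1 x).1
    rw [hU]
    constructor
    · intro hP
      by_contra hno
      push_neg at hno
      rcases hΛd with h3 | h3 <;> rcases hΓd with h4 | h4 <;> linarith [hno.1, hno.2]
    · rintro (h1 | h1)
      · rcases hΛd with h3 | h3 <;> linarith
      · rcases hΓd with h3 | h3 <;> linarith
  have main : ∀ (x : X) (Λ : Finset (Fin n)),
      (∑ i ∈ Λ, h i x) > 1/2 ↔ ∃ i ∈ Λ, h i x > 1/2 := by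
    intro x Λ
    induction Λ using Finset.induction_on with
    | empty => simp
    | insert a s ha ih =>
      rw [Finset.insert_eq, key x ({a} : Finset (Fin n)) s (Finset.disjoint_singleton_left.mpr ha)]
      simp only [Finset.sum_singleton, ih, Finset.mem_union, Finset.mem_singleton]
      constructor
      · rintro (h1 | ⟨i, hi, h1⟩)
        · exact ⟨a, Or.inl rfl, h1⟩
        · exact ⟨i, Or.inr hi, h1⟩
      · rintro ⟨i, hi | hi, h1⟩
        · exact Or.inl (hi ▸ h1)
        · exact Or.inr ⟨i, hi, h1⟩
  refine ⟨?_, ?_, ?_⟩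
  · intro i j hij
    rw [Set.eq_empty_iff_forall_notMem]
    intro x ⟨h1, h2⟩
    have := nokey x {i} {j} (Finset.disjoint_singleton.mpr hij)
    simp only [Finset.sum_singleton] at this
    exact this ⟨h1, h2⟩
  · rw [Set.eq_univ_iff_forall]
    intro x
    have h2 := (hpart ∅).2
    have hx : x ∈ ({y | (∑ i ∈ (∅ : Finset (Fin n)), h i y) > 1/2} ∪
        {y | (∑ i ∈ (∅ : Finset (Fin n))ᶜ, h i y) > 1/2}) := h2 ▸ Set.mem_univ x
    rcases hx with hx | hx
    · simp at hx; norm_num at hx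
    · have : (∑ i ∈ (∅ : Finset (Fin n))ᶜ, h i x) > 1/2 := hx
      rw [main x] at this
      obtain ⟨i, _, hi⟩ := this
      exact Set.mem_iUnion.mpr ⟨i, hi⟩
  · intro Λ
    ext x
    simp only [Set.mem_setOf_eq, Set.mem_iUnion]
    rw [main x Λ]
    simp
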